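/- (Gray code enumeration, from the proof of Proposition 2) For n ≥ 1, let B be the 2^n × n matrix whose i-th column is B_i = F⁽ⁿ⁾F⁽ⁿ⁻¹⁾⋯F⁽¹⁾ with F⁽ⁱ⁾ = A⁽ⁱ⁾ and F⁽ʲ⁾ = S⁽ʲ⁾ for all j ≠ i. Then the map sending each row index j ∈ {1, …, 2^n} to the j-th row of B is a bijection onto {−1, 1}^n; that is, the rows of B enumerate all 2^n strings of length n in the alphabet {−1, 1} without repetition. -/

import Mathlib

noncomputable def Smat (k : ℕ) : Matrix (Fin (2 ^ (k + 1))) (Fin (2 ^ k)) ℝ :=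
  Matrix.of fun i j =>
    if (i : ℕ) < 2 ^ k then (if (i : ℕ) = (j : ℕ) then 1 else 0)
    else (if (i : ℕ) + (j : ℕ) = 2 ^ (k + 1) - 1 then 1 else 0)

noncomputable def Amat (k : ℕ) : Matrix (Fin (2 ^ (k + 1))) (Fin (2 ^ k)) ℝ :=
  Matrix.of fun i j =>
    if (i : ℕ) < 2 ^ k then (if (i : ℕ) = (j : ℕ) then -1 else 0)
    else (if (i : ℕ) + (j : ℕ) = 2 ^ (k + 1) - 1 then 1 else 0)

noncomputable def Fmat (b : Bool) (k : ℕ) : Matrix (Fin (2 ^ (k + 1))) (Fin (2 ^ k)) ℝ :=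
  if b then Amat k else Smat k

noncomputable def prodVec : (n : ℕ) → (Fin n → Bool) → (Fin (2 ^ n) → ℝ)
  | 0, _ => fun _ => 1
  | n + 1, c => (Fmat (c (Fin.last n)) n).mulVec (prodVec n fun i => c i.castSucc)

def SA (n : ℕ) : Set (Fin (2 ^ n) → ℝ) := { v | ∃ c : Fin n → Bool, v = prodVec n c }

-- Auxiliary material -----------------------------------------------------

lemma pow_succ_two (k : ℕ) : 2 ^ (k + 1) = 2 ^ k + 2 ^ k := by ring

/-- folding map: first half is identity, second half reverses. -/
def rfold (k : ℕ) (i : Fin (2 ^ (k + 1))) : Fin (2 ^ k) :=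
  if h : (i : ℕ) < 2 ^ k then ⟨i, h⟩
  else ⟨2 ^ (k + 1) - 1 - i, by have := i.2; have h2 := pow_succ_two k; omega⟩

lemma sum_indicator (k : ℕ) (v : Fin (2 ^ k) → ℝ) (t : Fin (2 ^ k)) (P : Fin (2 ^ k) → Prop)
    [DecidablePred P] (hP : ∀ j, P j ↔ j = t) :
    (∑ j, (if P j then (1 : ℝ) else 0) * v j) = v t := by
  have : ∀ j, (if P j then (1 : ℝ) else 0) * v j = if j = t then v j else 0 := by
    intro j
    by_cases h : P j
    · rw [if_pos h, if_pos ((hP j).mp h), one_mul]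
    · rw [if_neg h, if_neg (fun e => h ((hP j).mpr e)), zero_mul]
  simp only [this, Finset.sum_ite_eq' Finset.univ t v, Finset.mem_univ, if_pos]

lemma smat_mulVec_apply (k : ℕ) (v : Fin (2 ^ k) → ℝ) (i : Fin (2 ^ (k + 1))) :
    (Smat k).mulVec v i = v (rfold k i) := by
  unfold Smat rfold Matrix.mulVec dotProduct
  by_cases h : (i : ℕ) < 2 ^ k
  · simp only [Matrix.of_apply, if_pos h, dif_pos h]
    exact sum_indicator k v ⟨i, h⟩ _ (fun j => by
      constructor <;> intro e
      · exact Fin.ext e.symm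
      · subst e; rfl)
  · simp only [Matrix.of_apply, if_neg h, dif_neg h]
    have h2 := pow_succ_two k
    have hi := i.2
    exact sum_indicator k v ⟨2 ^ (k + 1) - 1 - i, by omega⟩ _ (fun j => by
      constructor <;> intro e
      · exact Fin.ext (by have := j.2; simp only []; omega)
      · subst e; simp only []; omega)

lemma amul_apply (k : ℕ) (v : Fin (2 ^ k) → ℝ) (i : Fin (2 ^ (k + 1))) :
    (Amat k).mulVec v i = (if (i : ℕ) < 2 ^ k then -1 else 1) * v (rfold k i) := by
  unfold Amat rfold Matrix.mulVec dotProduct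
  by_cases h : (i : ℕ) < 2 ^ k
  · simp only [Matrix.of_apply, if_pos h, dif_pos h]
    have : (∑ j : Fin (2 ^ k), (if (i : ℕ) = (j : ℕ) then (-1 : ℝ) else 0) * v j)
        = -∑ j : Fin (2 ^ k), (if (i : ℕ) = (j : ℕ) then (1 : ℝ) else 0) * v j := by
      rw [← Finset.sum_neg_distrib]
      congr 1; funext j; by_cases e : (i : ℕ) = (j : ℕ) <;> simp [e]
    rw [this, sum_indicator k v ⟨i, h⟩ _ (fun j => by
      constructor <;> intro e
      · exact Fin.ext e.symm
      · subst e; rfl)]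
    ring
  · simp only [Matrix.of_apply, if_neg h, dif_neg h]
    have h2 := pow_succ_two k
    have hi := i.2
    rw [sum_indicator k v ⟨2 ^ (k + 1) - 1 - i, by omega⟩ _ (fun j => by
      constructor <;> intro e
      · exact Fin.ext (by have := j.2; simp only []; omega)
      · subst e; simp only []; omega)]
    ring

lemma prodVec_succ (n : ℕ) (c : Fin (n + 1) → Bool) :
    prodVec (n + 1) c = (Fmat (c (Fin.last n)) n).mulVec (prodVec n fun i => c i.castSucc) :=
  rfl

lemma prodVec_false (n : ℕ) (j : Fin (2 ^ n)) : prodVec n (fun _ => false) j = 1 := by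
  induction n with
  | zero => rfl
  | succ n ih =>
    rw [prodVec_succ]
    show (Fmat false n).mulVec _ j = 1
    rw [show Fmat false n = Smat n from rfl, smat_mulVec_apply]
    exact ih _

lemma prodVec_pm (n : ℕ) (c : Fin n → Bool) (j : Fin (2 ^ n)) :
    prodVec n c j = -1 ∨ prodVec n c j = 1 := by
  induction n with
  | zero => right; rfl
  | succ n ih =>
    rw [prodVec_succ]
    cases hb : c (Fin.last n)
    · rw [show Fmat false n = Smat n from rfl, smat_mulVec_apply]
      exact ih _ _
    · rw [show Fmat true n = Amat n from rfl, amul_apply]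
      rcases ih (fun i => c i.castSucc) (rfold n j) with h | h <;>
        rw [h] <;> by_cases hj : (j : ℕ) < 2 ^ n <;> simp [hj]

/-- The row map. -/
noncomputable def Row (n : ℕ) : Fin (2 ^ n) → Fin n → ℝ :=
  fun j i => prodVec n (fun l => decide (l = i)) j

lemma row_last (n : ℕ) (j : Fin (2 ^ (n + 1))) :
    Row (n + 1) j (Fin.last n) = if (j : ℕ) < 2 ^ n then -1 else 1 := by
  unfold Row
  rw [prodVec_succ]
  have h1 : (fun l : Fin n => decide (l.castSucc = Fin.last n)) = fun _ => false := by
    funext l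
    simp [Fin.ext_iff, (Fin.castSucc_lt_last l).ne]
  rw [show (decide (Fin.last n = Fin.last n)) = true by simp,
    show Fmat true n = Amat n from rfl, amul_apply, h1, prodVec_false, mul_one]

lemma row_castSucc (n : ℕ) (j : Fin (2 ^ (n + 1))) (i : Fin n) :
    Row (n + 1) j i.castSucc = Row n (rfold n j) i := by
  unfold Row
  rw [prodVec_succ]
  have h0 : (decide (Fin.last n = i.castSucc)) = false := by
    simp [Fin.ext_iff, (Fin.castSucc_lt_last i).ne']
  have h1 : (fun l : Fin n => decide (l.castSucc = i.castSucc)) = fun l => decide (l = i) := by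
    funext l; simp [Fin.castSucc_inj]
  rw [h0, show Fmat false n = Smat n from rfl, smat_mulVec_apply, h1]

lemma key (n : ℕ) :
    Function.Injective (Row n) ∧
      Set.range (Row n) = {x : Fin n → ℝ | ∀ i, x i = -1 ∨ x i = 1} := by
  induction n with
  | zero =>
    constructor
    · intro a b _
      have ha := a.2; have hb := b.2
      norm_num at ha hb
      exact Fin.ext (by omega)
    · ext x
      simp only [Set.mem_range, Set.mem_setOf_eq]
      constructor
      · intro _ i; exact i.elim0
      · intro _; exact ⟨0, funext fun i => i.elim0⟩
  | succ n ih =>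
    obtain ⟨ih1, ih2⟩ := ih
    have h2 := pow_succ_two n
    have hrfold : ∀ j j' : Fin (2 ^ (n + 1)), ((j : ℕ) < 2 ^ n ↔ (j' : ℕ) < 2 ^ n) →
        rfold n j = rfold n j' → j = j' := by
      intro j j' hiff he
      unfold rfold at he
      have hj := j.2; have hj' := j'.2
      by_cases h : (j : ℕ) < 2 ^ n
      · rw [dif_pos h, dif_pos (hiff.mp h)] at he
        exact Fin.ext (by simpa [Fin.ext_iff] using he)
      · rw [dif_neg h, dif_neg (fun hh => h (hiff.mpr hh))] at he
        simp only [Fin.ext_iff] at he ⊢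
        omega
    constructor
    · intro j j' h
      have hl := congrFun h (Fin.last n)
      rw [row_last, row_last] at hl
      have hiff : (j : ℕ) < 2 ^ n ↔ (j' : ℕ) < 2 ^ n := by
        by_cases a : (j : ℕ) < 2 ^ n <;> by_cases b : (j' : ℕ) < 2 ^ n <;>
          simp [a, b] at hl ⊢ <;> norm_num at hl
      have hc : Row n (rfold n j) = Row n (rfold n j') := by
        funext i
        have := congrFun h i.castSucc
        rwa [row_castSucc, row_castSucc] at this
      exact hrfold j j' hiff (ih1 hc)
    · ext x
      simp only [Set.mem_range, Set.mem_setOf_eq]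
      constructor
      · rintro ⟨j, rfl⟩ i
        exact prodVec_pm _ _ _
      · intro hx
        have hx' : (fun i => x i.castSucc) ∈ {y : Fin n → ℝ | ∀ i, y i = -1 ∨ y i = 1} :=
          fun i => hx i.castSucc
        rw [← ih2] at hx'
        obtain ⟨j', hj'⟩ := hx'
        rcases hx (Fin.last n) with hlast | hlast
        · refine ⟨⟨(j' : ℕ), by omega⟩, funext fun i => ?_⟩
          refine Fin.lastCases ?_ (fun i => ?_) i
          · rw [row_last, if_pos (by simpa using j'.2), hlast]
          · rw [row_castSucc]
            have : rfold n ⟨(j' : ℕ), by omega⟩ = j' := by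
              unfold rfold
              rw [dif_pos (by simpa using j'.2)]
            rw [this]
            exact congrFun hj' i
        · have hj'2 := j'.2
          refine ⟨⟨2 ^ (n + 1) - 1 - (j' : ℕ), by omega⟩, funext fun i => ?_⟩
          refine Fin.lastCases ?_ (fun i => ?_) i
          · rw [row_last, if_neg (by simp only []; omega), hlast]
          · rw [row_castSucc]
            have : rfold n ⟨2 ^ (n + 1) - 1 - (j' : ℕ), by omega⟩ = j' := by
              unfold rfold
              rw [dif_neg (by simp only []; omega)]
              exact Fin.ext (by simp only []; omega)
            rw [this]
            exact congrFun hj' i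

/-- Gray code enumeration: the rows of the matrix B (whose i-th
column is the product with A in position i and S elsewhere) enumerate all 2^n
strings in the alphabet {−1, 1} without repetition. -/
theorem stmt10 (n : ℕ) (hn : 1 ≤ n) :
    Function.Injective
      (fun (j : Fin (2 ^ n)) (i : Fin n) => prodVec n (fun l => decide (l = i)) j) ∧
    Set.range
      (fun (j : Fin (2 ^ n)) (i : Fin n) => prodVec n (fun l => decide (l = i)) j)
      = {x : Fin n → ℝ | ∀ i, x i = -1 ∨ x i = 1} := by
  exact key n
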